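/- Let G be a topological group, U a symmetric neighbourhood of the identity, and T a right U-uniformly discrete subset of G (i.e., Ut ∩ Ut' = ∅ for all distinct t, t' ∈ T). If T is right translation-compact then T is right translation-finite. -/

import Mathlib

open Pointwise

private lemma key_pair {G : Type*} [Group G] [TopologicalSpace G] [IsTopologicalGroup G]
    (U : Set G) (hU : U ∈ nhds (1 : G)) {S : Set G} (hS : S.Infinite)
    (hK : IsCompact (closure S)) :
    ∃ b ∈ S, ∃ b' ∈ S, b ≠ b' ∧ b' * b⁻¹ ∈ U := by
  obtain ⟨V, hVopen, hV1, hVV⟩ := exists_open_nhds_one_mul_subset hU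
  have hWnhds : V ∩ V⁻¹ ∈ nhds (1 : G) :=
    Filter.inter_mem (hVopen.mem_nhds hV1) (hVopen.inv.mem_nhds (by simpa using hV1))
  have hne : (Filter.cofinite ⊓ Filter.principal S).NeBot :=
    hS.cofinite_inf_principal_neBot
  have hle : Filter.cofinite ⊓ Filter.principal S ≤ Filter.principal (closure S) :=
    le_trans inf_le_right (Filter.principal_mono.mpr subset_closure)
  obtain ⟨x, -, hx⟩ := hK.exists_clusterPt hle
  have hxne : (nhds x ⊓ (Filter.cofinite ⊓ Filter.principal S)).NeBot := hx
  have hN : (fun y => y * x⁻¹) ⁻¹' (V ∩ V⁻¹) ∈ nhds x := by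
    have : Filter.Tendsto (fun y => y * x⁻¹) (nhds x) (nhds (1 : G)) := by
      have := (continuous_mul_right x⁻¹).tendsto x
      rwa [mul_inv_cancel] at this
    exact this hWnhds
  set N := (fun y => y * x⁻¹) ⁻¹' (V ∩ V⁻¹) with hNdef
  have hNmem : N ∈ nhds x ⊓ (Filter.cofinite ⊓ Filter.principal S) :=
    Filter.mem_inf_of_left hN
  have hSmem : S ∈ nhds x ⊓ (Filter.cofinite ⊓ Filter.principal S) :=
    Filter.mem_inf_of_right (Filter.mem_inf_of_right (Filter.mem_principal_self S))
  obtain ⟨b, hbN, hbS⟩ := Filter.nonempty_of_mem (Filter.inter_mem hNmem hSmem)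
  have hbc : ({b}ᶜ : Set G) ∈ nhds x ⊓ (Filter.cofinite ⊓ Filter.principal S) :=
    Filter.mem_inf_of_right (Filter.mem_inf_of_left ((Set.finite_singleton b).compl_mem_cofinite))
  obtain ⟨b', ⟨hb'N, hb'S⟩, hb'ne⟩ :=
    Filter.nonempty_of_mem (Filter.inter_mem (Filter.inter_mem hNmem hSmem) hbc)
  refine ⟨b, hbS, b', hb'S, fun h => hb'ne (by simp [h.symm]), ?_⟩
  have h1 : b' * x⁻¹ ∈ V := hb'N.1
  have h2 : (b * x⁻¹)⁻¹ ∈ V := by simpa using hbN.2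
  have : (b' * x⁻¹) * (b * x⁻¹)⁻¹ ∈ V * V := Set.mul_mem_mul h1 h2
  have heq : (b' * x⁻¹) * (b * x⁻¹)⁻¹ = b' * b⁻¹ := by group
  exact hVV (heq ▸ this)

private lemma sub_finite {G : Type*} [Group G] [TopologicalSpace G] [IsTopologicalGroup G]
    (U : Set G) (hU : U ∈ nhds (1 : G)) (T : Set G)
    (hdisc : ∀ t ∈ T, ∀ t' ∈ T, t ≠ t' → Disjoint (U * ({t} : Set G)) (U * ({t'} : Set G)))
    {S : Set G} (hST : S ⊆ T) (hK : IsCompact (closure S)) : S.Finite := by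
  by_contra hinf
  obtain ⟨t, htS, t', ht'S, hne, hmem⟩ := key_pair U hU (Set.not_infinite.not_right.mpr hinf : S.Infinite) hK
  have h1 : t' ∈ U * ({t} : Set G) := ⟨t' * t⁻¹, hmem, t, rfl, by group⟩
  have h2 : t' ∈ U * ({t'} : Set G) := ⟨1, mem_of_mem_nhds hU, t', rfl, one_mul t'⟩
  exact (Set.disjoint_left.mp (hdisc t (hST htS) t' (hST ht'S) hne) h1) h2

/-- For a right `U`-uniformly discrete subset `T` of a topological group `G` (with `U` a symmetric
neighbourhood of the identity), if `T` is right translation-compact then `T` is right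
translation-finite. -/
theorem rtf_of_rtc_of_uniformly_discrete {G : Type*} [Group G] [TopologicalSpace G]
    [IsTopologicalGroup G]
    (U : Set G) (hU : U ∈ nhds (1 : G)) (hUsymm : U⁻¹ = U)
    (T : Set G)
    (hdisc : ∀ t ∈ T, ∀ t' ∈ T, t ≠ t' → Disjoint (U * ({t} : Set G)) (U * ({t'} : Set G)))
    (htc : ∀ L : Set G, ¬ IsCompact (closure L) →
      ∃ F : Set G, F ⊆ L ∧ F.Finite ∧ IsCompact (closure (⋂ b ∈ F, (b * ·) ⁻¹' T))) :
    ∀ L : Set G, L.Infinite →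
      ∃ F : Set G, F ⊆ L ∧ F.Finite ∧ (⋂ b ∈ F, (b * ·) ⁻¹' T).Finite := by
  intro L hL
  by_cases hc : IsCompact (closure L)
  · obtain ⟨b, hbL, b', hb'L, hne, hbb⟩ := key_pair U hU hL hc
    refine ⟨{b, b'}, ?_, (Set.finite_singleton b').insert b, ?_⟩
    · intro x hx; rcases hx with h | h
      · exact h ▸ hbL
      · exact h ▸ hb'L
    · have hempty : (⋂ c ∈ ({b, b'} : Set G), (c * ·) ⁻¹' T) ⊆ ∅ := by
        intro a ha
        have hmem := Set.mem_iInter₂.mp ha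
        have h1 : b * a ∈ T := hmem b (Or.inl rfl)
        have h2 : b' * a ∈ T := hmem b' (Or.inr rfl)
        have hne' : b * a ≠ b' * a := fun h => hne (mul_right_cancel h)
        have hm1 : b' * a ∈ U * ({b * a} : Set G) :=
          ⟨b' * b⁻¹, hbb, b * a, rfl, by group⟩
        have hm2 : b' * a ∈ U * ({b' * a} : Set G) :=
          ⟨1, mem_of_mem_nhds hU, b' * a, rfl, one_mul _⟩
        exact (Set.disjoint_left.mp (hdisc _ h1 _ h2 hne') hm1 hm2).elim
      exact Set.Finite.subset (Set.finite_empty) hempty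
  · obtain ⟨F, hFL, hFfin, hcomp⟩ := htc L hc
    refine ⟨F, hFL, hFfin, ?_⟩
    have hFne : F.Nonempty := by
      rcases Set.eq_empty_or_nonempty F with h | h
      · exfalso
        rw [h] at hcomp
        simp only [Set.mem_empty_iff_false, Set.iInter_of_empty, Set.iInter_univ,
          closure_univ] at hcomp
        have : CompactSpace G := isCompact_univ_iff.mp hcomp
        exact hc isClosed_closure.isCompact
      · exact h
    obtain ⟨b, hb⟩ := hFne
    set A := ⋂ c ∈ F, (c * ·) ⁻¹' T with hA
    have hsub : (fun a => b * a) '' A ⊆ T := by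
      rintro _ ⟨a, ha, rfl⟩
      exact Set.mem_iInter₂.mp ha b hb
    have hclos : closure ((fun a => b * a) '' A) = (fun a => b * a) '' closure A :=
      ((Homeomorph.mulLeft b).image_closure A).symm
    have himgfin : ((fun a => b * a) '' A).Finite :=
      sub_finite U hU T hdisc hsub (hclos ▸ hcomp.image (continuous_mul_left b))
    exact Set.Finite.of_finite_image himgfin ((mul_right_injective b).injOn)
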